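/- Let s_k(z) denote the sum of the k largest absolute values of coordinates of z ∈ ℝⁿ, and suppose |z|_{(k)} > 0. Define T_k = {i : |z_i| > |z|_{(k)}}, E_k = {i : |z_i| = |z|_{(k)}}, R_k = {i : |z_i| < |z|_{(k)}}. Then the subdifferential ∂s_k(z) = {v ∈ ℝⁿ : ‖v‖_∞ ≤ 1, v_i = sign(z_i) for i ∈ T_k, v_i ∈ ℝ₊·sign(z_i) for i ∈ E_k, v_i = 0 for i ∈ R_k, and Σ_{i∈E_k}|v_i| = k − |T_k|}. -/

import Mathlib

open scoped RealInnerProductSpace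
noncomputable section

/-- `sk n k w` is the sum of the `k` largest absolute values of coordinates of `w`. -/
def sk (n k : ℕ) (w : EuclideanSpace ℝ (Fin n)) : ℝ :=
  sSup {t : ℝ | ∃ S : Finset (Fin n), S.card = k ∧ t = ∑ i ∈ S, |w i|}

/-- Convex subdifferential of a real-valued function. -/
def rsubdiff {X : Type*} [NormedAddCommGroup X] [InnerProductSpace ℝ X]
    (g : X → ℝ) (x : X) : Set X :=
  {v | ∀ y, g x + ⟪v, y - x⟫ ≤ g y}

namespace Stmt10Aux

lemma sign_mul_self (x : ℝ) : Real.sign x * x = |x| := by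
  rcases lt_trichotomy x 0 with h | h | h
  · rw [Real.sign_of_neg h, abs_of_neg h]; ring
  · simp [h]
  · rw [Real.sign_of_pos h, abs_of_pos h]; ring

lemma abs_sign_le_one (x : ℝ) : |Real.sign x| ≤ 1 := by
  rcases lt_trichotomy x 0 with h | h | h
  · rw [Real.sign_of_neg h]; norm_num
  · simp [h]
  · rw [Real.sign_of_pos h]; norm_num

variable {n k : ℕ}

lemma skSet_finite (w : EuclideanSpace ℝ (Fin n)) :
    {t : ℝ | ∃ S : Finset (Fin n), S.card = k ∧ t = ∑ i ∈ S, |w i|}.Finite := by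
  apply Set.Finite.subset (Set.finite_range (fun S : Finset (Fin n) => ∑ i ∈ S, |w i|))
  rintro t ⟨S, -, rfl⟩; exact ⟨S, rfl⟩

lemma skSet_nonempty (hkn : k ≤ n) (w : EuclideanSpace ℝ (Fin n)) :
    {t : ℝ | ∃ S : Finset (Fin n), S.card = k ∧ t = ∑ i ∈ S, |w i|}.Nonempty := by
  obtain ⟨S, -, hS⟩ := Finset.exists_subset_card_eq (show k ≤ (Finset.univ : Finset (Fin n)).card by simpa using hkn)
  exact ⟨_, S, hS, rfl⟩

lemma le_sk (w : EuclideanSpace ℝ (Fin n)) {S : Finset (Fin n)} (hS : S.card = k) :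
    ∑ i ∈ S, |w i| ≤ sk n k w :=
  le_csSup (skSet_finite w).bddAbove ⟨S, hS, rfl⟩

lemma sk_le (hkn : k ≤ n) (w : EuclideanSpace ℝ (Fin n)) {t : ℝ}
    (ht : ∀ S : Finset (Fin n), S.card = k → ∑ i ∈ S, |w i| ≤ t) : sk n k w ≤ t :=
  csSup_le (skSet_nonempty hkn w) (by rintro x ⟨S, hS, rfl⟩; exact ht S hS)

lemma exists_sk (hkn : k ≤ n) (w : EuclideanSpace ℝ (Fin n)) :
    ∃ S : Finset (Fin n), S.card = k ∧ sk n k w = ∑ i ∈ S, |w i| :=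
  (skSet_nonempty hkn w).csSup_mem (skSet_finite w)

lemma inner_eq (v x : EuclideanSpace ℝ (Fin n)) : ⟪v, x⟫ = ∑ i, v i * x i := by
  simp [PiLp.inner_apply, RCLike.inner_apply, mul_comm]

lemma inner_le_sk (hk1 : 1 ≤ k) (hkn : k ≤ n) (v w : EuclideanSpace ℝ (Fin n))
    (hv1 : ∀ i, |v i| ≤ 1) (hvk : ∑ i, |v i| ≤ (k : ℝ)) :
    ∑ i, v i * w i ≤ sk n k w := by
  obtain ⟨S, hScard, hSval⟩ := exists_sk hkn w
  -- exchange property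
  have hex : ∀ i ∉ S, ∀ j ∈ S, |w i| ≤ |w j| := by
    intro i hi j hj
    by_contra hlt
    push_neg at hlt
    have hins : i ∉ S.erase j := fun h => hi (Finset.mem_of_mem_erase h)
    have hcard' : (insert i (S.erase j)).card = k := by
      rw [Finset.card_insert_of_notMem hins, Finset.card_erase_of_mem hj, hScard]
      omega
    have hle := le_sk w hcard'
    rw [Finset.sum_insert hins] at hle
    have herase : ∑ x ∈ S.erase j, |w x| = ∑ x ∈ S, |w x| - |w j| := by
      rw [Finset.sum_erase_eq_sub hj]
    rw [herase, hSval] at hle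
    linarith
  -- j₀ minimizing |w| over S
  have hSne : S.Nonempty := Finset.card_pos.mp (by omega)
  obtain ⟨j₀, hj₀S, hj₀min⟩ := Finset.exists_min_image S (fun j => |w j|) hSne
  set c := |w j₀| with hc
  have hc0 : 0 ≤ c := abs_nonneg _
  have step1 : ∑ i, v i * w i ≤ ∑ i, |v i| * |w i| := by
    apply Finset.sum_le_sum
    intro i _
    rw [← abs_mul]
    exact le_abs_self _
  have hsplit : ∑ i, |v i| * |w i| = ∑ i ∈ S, |v i| * |w i| + ∑ i ∈ Sᶜ, |v i| * |w i| := by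
    rw [Finset.sum_add_sum_compl]
  have hsplit2 : ∑ i, |v i| = ∑ i ∈ S, |v i| + ∑ i ∈ Sᶜ, |v i| := by
    rw [Finset.sum_add_sum_compl]
  have h2 : ∑ i ∈ Sᶜ, |v i| * |w i| ≤ c * ∑ i ∈ Sᶜ, |v i| := by
    rw [Finset.mul_sum]
    apply Finset.sum_le_sum
    intro i hi
    have hiS : i ∉ S := by simpa using hi
    have := hex i hiS j₀ hj₀S
    rw [mul_comm]
    exact mul_le_mul_of_nonneg_right this (abs_nonneg _)
  have h3 : c * ∑ i ∈ Sᶜ, |v i| ≤ c * ((k : ℝ) - ∑ i ∈ S, |v i|) := by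
    apply mul_le_mul_of_nonneg_left _ hc0
    linarith
  have h4 : c * ((k : ℝ) - ∑ i ∈ S, |v i|) ≤ ∑ j ∈ S, (1 - |v j|) * |w j| := by
    have : c * ((k : ℝ) - ∑ i ∈ S, |v i|) = ∑ j ∈ S, (1 - |v j|) * c := by
      have h' : ∑ j ∈ S, (1 - |v j|) * c = ∑ j ∈ S, c - ∑ j ∈ S, |v j| * c := by
        rw [← Finset.sum_sub_distrib]
        apply Finset.sum_congr rfl
        intro j _; ring
      rw [h', Finset.sum_const, hScard, nsmul_eq_mul, ← Finset.sum_mul]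
      ring
    rw [this]
    apply Finset.sum_le_sum
    intro j hj
    exact mul_le_mul_of_nonneg_left (hj₀min j hj) (by linarith [hv1 j])
  have h5 : ∑ i ∈ S, |v i| * |w i| + ∑ j ∈ S, (1 - |v j|) * |w j| = ∑ i ∈ S, |w i| := by
    rw [← Finset.sum_add_distrib]
    apply Finset.sum_congr rfl
    intro i _
    ring
  rw [hSval]
  linarith

lemma sk_smul (hkn : k ≤ n) {t : ℝ} (ht : 0 ≤ t) (w : EuclideanSpace ℝ (Fin n)) :
    sk n k (t • w) = t * sk n k w := by
  apply le_antisymm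
  · apply sk_le hkn
    intro S hS
    have : ∑ i ∈ S, |(t • w) i| = t * ∑ i ∈ S, |w i| := by
      rw [Finset.mul_sum]
      apply Finset.sum_congr rfl
      intro i _
      simp [abs_mul, abs_of_nonneg ht]
    rw [this]
    exact mul_le_mul_of_nonneg_left (le_sk w hS) ht
  · obtain ⟨S, hScard, hSval⟩ := exists_sk hkn w
    have : t * sk n k w = ∑ i ∈ S, |(t • w) i| := by
      rw [hSval, Finset.mul_sum]
      apply Finset.sum_congr rfl
      intro i _
      simp [abs_mul, abs_of_nonneg ht]
    rw [this]
    exact le_sk _ hScard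

lemma sk_zero (hkn : k ≤ n) : sk n k (0 : EuclideanSpace ℝ (Fin n)) = 0 := by
  have h := sk_smul (k := k) hkn le_rfl (0 : EuclideanSpace ℝ (Fin n))
  simpa using h

lemma sk_val (hkn : k ≤ n) (z : EuclideanSpace ℝ (Fin n)) {m : ℝ} (hm : 0 < m)
    (htc : (Finset.univ.filter fun i => m < |z i|).card < k)
    (hce : k ≤ (Finset.univ.filter fun i => m < |z i|).card
            + (Finset.univ.filter fun i => |z i| = m).card) :
    sk n k z = ∑ i ∈ Finset.univ.filter (fun i => m < |z i|), |z i|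
      + m * ((k : ℝ) - (Finset.univ.filter fun i => m < |z i|).card) := by
  set Tf := Finset.univ.filter (fun i : Fin n => m < |z i|) with hTf
  set Ef := Finset.univ.filter (fun i : Fin n => |z i| = m) with hEf
  apply le_antisymm
  · apply sk_le hkn
    intro S hS
    have hsum1 : ∑ i ∈ S ∩ Tf, |z i| + ∑ i ∈ S \ Tf, |z i| = ∑ i ∈ S, |z i| :=
      Finset.sum_inter_add_sum_sdiff S Tf _
    have hsum2 : ∑ i ∈ Tf ∩ S, |z i| + ∑ i ∈ Tf \ S, |z i| = ∑ i ∈ Tf, |z i| :=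
      Finset.sum_inter_add_sum_sdiff Tf S _
    have hcomm : Tf ∩ S = S ∩ Tf := Finset.inter_comm _ _
    rw [hcomm] at hsum2
    have hb1 : ∑ i ∈ S \ Tf, |z i| ≤ ((S \ Tf).card : ℝ) * m := by
      rw [← nsmul_eq_mul, ← Finset.sum_const]
      apply Finset.sum_le_sum
      intro i hi
      have : ¬ (m < |z i|) := by
        have := (Finset.mem_sdiff.mp hi).2
        simpa [hTf] using this
      linarith
    have hb2 : ((Tf \ S).card : ℝ) * m ≤ ∑ i ∈ Tf \ S, |z i| := by
      rw [← nsmul_eq_mul, ← Finset.sum_const]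
      apply Finset.sum_le_sum
      intro i hi
      have hi' : m < |z i| := by
        have := (Finset.mem_sdiff.mp hi).1
        simpa [hTf] using this
      linarith
    have hc1 : (S ∩ Tf).card + (S \ Tf).card = k := by
      rw [Finset.card_inter_add_card_sdiff, hS]
    have hc2 : (S ∩ Tf).card + (Tf \ S).card = Tf.card := by
      rw [← hcomm, Finset.card_inter_add_card_sdiff]
    have hc1' : ((S ∩ Tf).card : ℝ) + ((S \ Tf).card : ℝ) = (k : ℝ) := by
      exact_mod_cast congrArg (Nat.cast : ℕ → ℝ) hc1
    have hc2' : ((S ∩ Tf).card : ℝ) + ((Tf \ S).card : ℝ) = (Tf.card : ℝ) := by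
      exact_mod_cast congrArg (Nat.cast : ℕ → ℝ) hc2
    nlinarith [hm.le]
  · obtain ⟨F, hFE, hFcard⟩ := Finset.exists_subset_card_eq (show k - Tf.card ≤ Ef.card by omega)
    have hdisj : Disjoint Tf F := by
      rw [Finset.disjoint_left]
      intro i hiT hiF
      have h1 : m < |z i| := by simpa [hTf] using hiT
      have h2 : |z i| = m := by simpa [hEf] using hFE hiF
      linarith
    have hcard : (Tf ∪ F).card = k := by
      rw [Finset.card_union_of_disjoint hdisj, hFcard]
      omega
    have hval : ∑ i ∈ Tf ∪ F, |z i| = ∑ i ∈ Tf, |z i| + m * ((k : ℝ) - Tf.card) := by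
      rw [Finset.sum_union hdisj]
      congr 1
      have : ∀ i ∈ F, |z i| = m := fun i hi => by simpa [hEf] using hFE hi
      rw [Finset.sum_congr rfl this, Finset.sum_const, hFcard, nsmul_eq_mul,
        Nat.cast_sub (le_of_lt htc)]
      ring
    rw [← hval]
    exact le_sk z hcard

lemma subdiff_inner_z (hkn : k ≤ n) (z : EuclideanSpace ℝ (Fin n))
    (v : EuclideanSpace ℝ (Fin n)) (hv : v ∈ rsubdiff (sk n k) z) :
    sk n k z ≤ ∑ i, v i * z i := by
  have h := hv 0
  rw [sk_zero hkn, zero_sub, inner_neg_right, inner_eq] at h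
  linarith

lemma subdiff_support (hkn : k ≤ n) (z : EuclideanSpace ℝ (Fin n))
    (v : EuclideanSpace ℝ (Fin n)) (hv : v ∈ rsubdiff (sk n k) z) :
    ∀ y : EuclideanSpace ℝ (Fin n), ∑ i, v i * y i ≤ sk n k y := by
  intro y
  by_contra hlt
  push_neg at hlt
  set d := ∑ i, v i * y i - sk n k y with hd
  have hd0 : 0 < d := by linarith
  set C := ∑ i, v i * z i - sk n k z with hC
  have hC0 : 0 ≤ C := by
    have := subdiff_inner_z hkn z v hv
    simp [hC]
    linarith
  have key : ∀ t : ℝ, 0 < t → t * d ≤ C := by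
    intro t ht
    have h := hv (t • y)
    rw [inner_eq, sk_smul hkn ht.le] at h
    have hexp : ∑ i, v i * (t • y - z) i = t * ∑ i, v i * y i - ∑ i, v i * z i := by
      rw [Finset.mul_sum, ← Finset.sum_sub_distrib]
      apply Finset.sum_congr rfl
      intro i _
      have : (t • y - z) i = t * y i - z i := by
        simp [PiLp.sub_apply, PiLp.smul_apply, smul_eq_mul]
      rw [this]
      ring
    rw [hexp] at h
    simp only [hd, hC]
    nlinarith
  have := key ((C + 1) / d) (by positivity)
  rw [div_mul_cancel₀ _ (ne_of_gt hd0)] at this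
  linarith
end Stmt10Aux

open Stmt10Aux in
/-- subdifferential of `s_k` at `z` when the `k`-th largest absolute
value `m = |z|_(k)` is positive.  With `T = {i : |z i| > m}`, `E = {i : |z i| = m}`,
`R = {i : |z i| < m}`, one has
`∂s_k(z) = {v : ‖v‖∞ ≤ 1, v_i = sign z_i on T, v_i ∈ ℝ₊·sign z_i on E, v_i = 0 on R,
Σ_{i∈E}|v_i| = k − |T|}`. -/
theorem stmt10 (n k : ℕ) (hk1 : 1 ≤ k) (hkn : k ≤ n)
    (z : EuclideanSpace ℝ (Fin n)) (m : ℝ) (hm : 0 < m)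
    (hcard₁ : {i : Fin n | m < |z i|}.ncard < k)
    (hcard₂ : k ≤ {i : Fin n | m ≤ |z i|}.ncard) :
    rsubdiff (sk n k) z =
      {v : EuclideanSpace ℝ (Fin n) |
        (∀ i, |v i| ≤ 1) ∧
        (∀ i, m < |z i| → v i = Real.sign (z i)) ∧
        (∀ i, |z i| = m → ∃ c : ℝ, 0 ≤ c ∧ v i = c * Real.sign (z i)) ∧
        (∀ i, |z i| < m → v i = 0) ∧
        (∑ᶠ i ∈ {i : Fin n | |z i| = m}, |v i|)
          = (k : ℝ) - ({i : Fin n | m < |z i|}.ncard : ℝ)} := by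
  classical
  set Tf := Finset.univ.filter (fun i : Fin n => m < |z i|) with hTfdef
  set Ef := Finset.univ.filter (fun i : Fin n => |z i| = m) with hEfdef
  set Rf := Finset.univ.filter (fun i : Fin n => |z i| < m) with hRfdef
  have hncardT : {i : Fin n | m < |z i|}.ncard = Tf.card := by
    rw [Set.ncard_eq_toFinset_card', Set.toFinset_setOf]
  have hncardM : {i : Fin n | m ≤ |z i|}.ncard = Tf.card + Ef.card := by
    rw [Set.ncard_eq_toFinset_card', Set.toFinset_setOf]
    have hU : Finset.univ.filter (fun i : Fin n => m ≤ |z i|) = Tf ∪ Ef := by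
      ext i
      simp only [Finset.mem_filter, Finset.mem_univ, true_and, Finset.mem_union, hTfdef, hEfdef]
      constructor
      · intro h
        rcases lt_or_eq_of_le h with h' | h'
        · exact Or.inl h'
        · exact Or.inr h'.symm
      · rintro (h | h)
        · exact h.le
        · exact h.ge
    have hdTE : Disjoint Tf Ef := by
      rw [Finset.disjoint_left]
      intro i hiT hiE
      have h1 : m < |z i| := by simpa [hTfdef] using hiT
      have h2 : |z i| = m := by simpa [hEfdef] using hiE
      linarith
    rw [hU, Finset.card_union_of_disjoint hdTE]
  rw [hncardT] at hcard₁
  rw [hncardM] at hcard₂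
  have hESset : {i : Fin n | |z i| = m} = (Ef : Set (Fin n)) := by
    ext i; simp [hEfdef]
  have hskz := sk_val hkn z hm hcard₁ hcard₂
  rw [← hTfdef] at hskz
  have hdTR : Disjoint Tf Rf := by
    rw [Finset.disjoint_left]
    intro i hiT hiR
    have h1 : m < |z i| := by simpa [hTfdef] using hiT
    have h2 : |z i| < m := by simpa [hRfdef] using hiR
    linarith
  have hdER : Disjoint Ef Rf := by
    rw [Finset.disjoint_left]
    intro i hiE hiR
    have h1 : |z i| = m := by simpa [hEfdef] using hiE
    have h2 : |z i| < m := by simpa [hRfdef] using hiR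
    linarith
  have hdTE : Disjoint Tf Ef := by
    rw [Finset.disjoint_left]
    intro i hiT hiE
    have h1 : m < |z i| := by simpa [hTfdef] using hiT
    have h2 : |z i| = m := by simpa [hEfdef] using hiE
    linarith
  have hpart : ∀ f : Fin n → ℝ,
      ∑ i, f i = ∑ i ∈ Tf, f i + ∑ i ∈ Ef, f i + ∑ i ∈ Rf, f i := by
    intro f
    have hU : Tf ∪ Ef ∪ Rf = Finset.univ := by
      ext i
      simp only [Finset.mem_union, Finset.mem_filter, Finset.mem_univ, true_and, iff_true,
        hTfdef, hEfdef, hRfdef]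
      rcases lt_trichotomy m (|z i|) with h | h | h
      · exact Or.inl (Or.inl h)
      · exact Or.inl (Or.inr h.symm)
      · exact Or.inr h
    rw [← hU, Finset.sum_union (Finset.disjoint_union_left.mpr ⟨hdTR, hdER⟩),
      Finset.sum_union hdTE]
  ext v
  simp only [rsubdiff, Set.mem_setOf_eq]
  constructor
  · intro hv
    have hsupp := subdiff_support hkn z v hv
    have hvz : ∑ i, v i * z i = sk n k z :=
      le_antisymm (hsupp z) (subdiff_inner_z hkn z v hv)
    have hv1 : ∀ i, |v i| ≤ 1 := by
      intro i
      have key : ∀ c : ℝ, |c| ≤ 1 → v i * c ≤ 1 := by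
        intro c hc
        have h := hsupp (WithLp.toLp 2 (fun j => if j = i then c else 0 : Fin n → ℝ) :
          EuclideanSpace ℝ (Fin n))
        have h1 : ∑ j, v j * (if j = i then c else 0) = v i * c := by
          rw [Finset.sum_congr rfl (fun j _ => show v j * (if j = i then c else 0)
            = if j = i then v j * c else 0 by split <;> simp)]
          rw [Finset.sum_ite_eq' Finset.univ i (fun j => v j * c)]
          simp
        have h2 : sk n k (WithLp.toLp 2 (fun j => if j = i then c else 0 : Fin n → ℝ) :
            EuclideanSpace ℝ (Fin n)) ≤ 1 := by
          apply sk_le hkn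
          intro S hS
          have : ∑ j ∈ S, |(if j = i then c else 0 : ℝ)| =
              ∑ j ∈ S, (if j = i then |c| else 0) := by
            apply Finset.sum_congr rfl
            intro j _
            split <;> simp
          rw [this, Finset.sum_ite_eq' S i (fun _ => |c|)]
          split <;> [exact hc; norm_num]
        calc v i * c = ∑ j, v j * (if j = i then c else 0) := h1.symm
          _ ≤ sk n k _ := h
          _ ≤ 1 := h2
      have k1 := key 1 (by norm_num)
      have k2 := key (-1) (by norm_num)
      rw [abs_le]
      constructor <;> nlinarith
    have hvk : ∑ i, |v i| ≤ (k : ℝ) := by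
      have h := hsupp (WithLp.toLp 2 (fun j => Real.sign (v j) : Fin n → ℝ) : EuclideanSpace ℝ (Fin n))
      have h1 : ∑ j, v j * Real.sign (v j) = ∑ j, |v j| :=
        Finset.sum_congr rfl fun j _ => by rw [mul_comm, Stmt10Aux.sign_mul_self]
      have h2 : sk n k (WithLp.toLp 2 (fun j => Real.sign (v j) : Fin n → ℝ) :
          EuclideanSpace ℝ (Fin n)) ≤ (k : ℝ) := by
        apply sk_le hkn
        intro S hS
        calc ∑ j ∈ S, |Real.sign (v j)| ≤ ∑ j ∈ S, (1 : ℝ) :=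
              Finset.sum_le_sum fun j _ => abs_sign_le_one _
          _ = (k : ℝ) := by rw [Finset.sum_const, hS, nsmul_eq_mul, mul_one]
      linarith [h1 ▸ h]
    -- equality chain
    have h01 : ∑ i, v i * z i ≤ ∑ i, |v i| * |z i| :=
      Finset.sum_le_sum fun i _ => by rw [← abs_mul]; exact le_abs_self _
    have hs1 := hpart (fun i => |v i| * |z i|)
    have hs2 := hpart (fun i => |v i|)
    have hEm : ∑ i ∈ Ef, |v i| * |z i| = (∑ i ∈ Ef, |v i|) * m := by
      rw [Finset.sum_mul]
      apply Finset.sum_congr rfl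
      intro i hi
      have : |z i| = m := by simpa [hEfdef] using hi
      rw [this]
    have hRle : ∀ i ∈ Rf, |v i| * |z i| ≤ |v i| * m := by
      intro i hi
      have : |z i| < m := by simpa [hRfdef] using hi
      exact mul_le_mul_of_nonneg_left this.le (abs_nonneg _)
    have h12 : ∑ i ∈ Rf, |v i| * |z i| ≤ (∑ i ∈ Rf, |v i|) * m := by
      rw [Finset.sum_mul]
      exact Finset.sum_le_sum hRle
    have hTterm : ∀ i ∈ Tf, |v i| * (|z i| - m) ≤ |z i| - m := by
      intro i hi
      have h1 : m < |z i| := by simpa [hTfdef] using hi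
      exact mul_le_of_le_one_left (by linarith) (hv1 i)
    have h34 : ∑ i ∈ Tf, |v i| * (|z i| - m) ≤ ∑ i ∈ Tf, (|z i| - m) :=
      Finset.sum_le_sum hTterm
    have idT : ∑ i ∈ Tf, |v i| * (|z i| - m)
        = ∑ i ∈ Tf, |v i| * |z i| - (∑ i ∈ Tf, |v i|) * m := by
      rw [Finset.sum_mul, ← Finset.sum_sub_distrib]
      apply Finset.sum_congr rfl
      intro i _; ring
    have idT2 : ∑ i ∈ Tf, (|z i| - m) = ∑ i ∈ Tf, |z i| - (Tf.card : ℝ) * m := by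
      rw [Finset.sum_sub_distrib, Finset.sum_const, nsmul_eq_mul]
    -- all inequalities are equalities
    have h23 : (∑ i ∈ Ef, |v i|) * m + (∑ i ∈ Rf, |v i|) * m
        ≤ (k : ℝ) * m - (∑ i ∈ Tf, |v i|) * m := by
      have hlin : (∑ i ∈ Ef, |v i|) + (∑ i ∈ Rf, |v i|) ≤ (k : ℝ) - ∑ i ∈ Tf, |v i| := by
        linarith
      have := mul_le_mul_of_nonneg_right hlin hm.le
      rw [add_mul, sub_mul] at this
      exact this
    have hcomm1 : m * ((k : ℝ) - (Tf.card : ℝ)) = (k : ℝ) * m - (Tf.card : ℝ) * m := by ring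
    have hEq0 : ∑ i, v i * z i = ∑ i, |v i| * |z i| := by
      apply le_antisymm h01
      linarith
    have hEqR : ∑ i ∈ Rf, |v i| * |z i| = (∑ i ∈ Rf, |v i|) * m := by
      apply le_antisymm h12
      linarith
    have hEqT : ∑ i ∈ Tf, |v i| * (|z i| - m) = ∑ i ∈ Tf, (|z i| - m) := by
      apply le_antisymm h34
      linarith
    have hEqK : (∑ i ∈ Ef, |v i|) + (∑ i ∈ Rf, |v i|) = (k : ℝ) - ∑ i ∈ Tf, |v i| := by
      have hprod : ((∑ i ∈ Ef, |v i|) + (∑ i ∈ Rf, |v i|)) * m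
          = ((k : ℝ) - ∑ i ∈ Tf, |v i|) * m := by
        rw [add_mul, sub_mul]
        linarith
      exact mul_right_cancel₀ hm.ne' hprod
    -- termwise consequences
    have hterm0 : ∀ i ∈ Finset.univ, v i * z i = |v i| * |z i| :=
      (Finset.sum_eq_sum_iff_of_le (fun i _ => by rw [← abs_mul]; exact le_abs_self _)).1 hEq0
    have htermT : ∀ i ∈ Tf, |v i| * (|z i| - m) = |z i| - m :=
      (Finset.sum_eq_sum_iff_of_le hTterm).1 hEqT
    have habsT : ∀ i ∈ Tf, |v i| = 1 := by
      intro i hi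
      have h1 : m < |z i| := by simpa [hTfdef] using hi
      have := htermT i hi
      have h2 : |z i| - m ≠ 0 := by linarith
      have h3 : |v i| * (|z i| - m) = 1 * (|z i| - m) := by linarith
      exact mul_right_cancel₀ h2 h3
    have htermR : ∀ i ∈ Rf, |v i| * |z i| = |v i| * m := by
      have hRle' : ∀ i ∈ Rf, |v i| * |z i| ≤ |v i| * m := hRle
      have : ∑ i ∈ Rf, |v i| * |z i| = ∑ i ∈ Rf, |v i| * m := by
        rw [hEqR, Finset.sum_mul]
      exact (Finset.sum_eq_sum_iff_of_le hRle').1 this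
    have hvR : ∀ i ∈ Rf, v i = 0 := by
      intro i hi
      have h1 : |z i| < m := by simpa [hRfdef] using hi
      have := htermR i hi
      have h2 : |v i| * (m - |z i|) = 0 := by linarith
      rcases mul_eq_zero.mp h2 with h | h
      · exact abs_eq_zero.mp h
      · linarith
    have hsumT : ∑ i ∈ Tf, |v i| = (Tf.card : ℝ) := by
      rw [Finset.sum_congr rfl habsT, Finset.sum_const, nsmul_eq_mul, mul_one]
    have hsumR : ∑ i ∈ Rf, |v i| = 0 := by
      rw [Finset.sum_congr rfl (fun i hi => by rw [hvR i hi, abs_zero]), Finset.sum_const,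
        smul_zero]
    have hsumE : ∑ i ∈ Ef, |v i| = (k : ℝ) - (Tf.card : ℝ) := by
      rw [hsumT, hsumR] at hEqK
      linarith
    refine ⟨hv1, ?_, ?_, ?_, ?_⟩
    · intro i hi
      have hiT : i ∈ Tf := by simp [hTfdef, hi]
      have habs := habsT i hiT
      have hvi : v i * z i = |z i| := by
        have := hterm0 i (Finset.mem_univ i)
        rw [habs, one_mul] at this
        exact this
      have hz : z i ≠ 0 := by
        intro h
        rw [h, abs_zero] at hi
        linarith
      rcases lt_trichotomy (z i) 0 with h | h | h
      · rw [Real.sign_of_neg h]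
        rw [abs_of_neg h] at hvi
        have : v i * z i = -1 * z i := by linarith
        exact mul_right_cancel₀ hz this
      · exact absurd h hz
      · rw [Real.sign_of_pos h]
        rw [abs_of_pos h] at hvi
        have : v i * z i = 1 * z i := by linarith
        exact mul_right_cancel₀ hz this
    · intro i hi
      refine ⟨|v i|, abs_nonneg _, ?_⟩
      have hvi : v i * z i = |v i| * |z i| := hterm0 i (Finset.mem_univ i)
      have hz : z i ≠ 0 := by
        intro h
        rw [h, abs_zero] at hi
        linarith
      rcases lt_trichotomy (z i) 0 with h | h | h
      · rw [Real.sign_of_neg h]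
        rw [abs_of_neg h] at hvi
        have : v i * z i = (|v i| * -1) * z i := by ring_nf; linarith
        exact mul_right_cancel₀ hz this
      · exact absurd h hz
      · rw [Real.sign_of_pos h]
        rw [abs_of_pos h] at hvi
        have : v i * z i = (|v i| * 1) * z i := by ring_nf; linarith
        exact mul_right_cancel₀ hz this
    · intro i hi
      exact hvR i (by simp [hRfdef, hi])
    · have hfin : (∑ᶠ (i : Fin n) (_ : |z i| = m), |v i|) = ∑ i ∈ Ef, |v i| :=
        finsum_cond_eq_sum_of_cond_iff _ (fun {x} _ => by simp [hEfdef])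
      rw [hfin, hncardT]
      exact hsumE
  · rintro ⟨hv1, hT, hE, hR, hEsum⟩
    have hfin : (∑ᶠ (i : Fin n) (_ : |z i| = m), |v i|) = ∑ i ∈ Ef, |v i| :=
      finsum_cond_eq_sum_of_cond_iff _ (fun {x} _ => by simp [hEfdef])
    rw [hfin, hncardT] at hEsum
    have habsT : ∀ i ∈ Tf, |v i| = 1 := by
      intro i hi
      have h1 : m < |z i| := by simpa [hTfdef] using hi
      have hz : z i ≠ 0 := by
        intro h; rw [h, abs_zero] at h1; linarith
      rw [hT i h1]
      rcases lt_trichotomy (z i) 0 with h | h | h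
      · rw [Real.sign_of_neg h]; norm_num
      · exact absurd h hz
      · rw [Real.sign_of_pos h]; norm_num
    have habsE : ∀ i ∈ Ef, |v i| * |z i| = v i * z i ∧ |v i| * m = v i * z i := by
      intro i hi
      have h1 : |z i| = m := by simpa [hEfdef] using hi
      have hz : z i ≠ 0 := by
        intro h; rw [h, abs_zero] at h1; linarith
      obtain ⟨c, hc0, hc⟩ := hE i h1
      rcases lt_trichotomy (z i) 0 with h | h | h
      · rw [Real.sign_of_neg h] at hc
        have habs : |v i| = c := by rw [hc]; rw [abs_of_nonpos (by linarith)]; ring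
        constructor
        · rw [habs, hc, abs_of_neg h]; ring
        · rw [habs, hc, ← h1, abs_of_neg h]; ring
      · exact absurd h hz
      · rw [Real.sign_of_pos h] at hc
        have habs : |v i| = c := by rw [hc, mul_one, abs_of_nonneg hc0]
        constructor
        · rw [habs, hc, abs_of_pos h]; ring
        · rw [habs, hc, ← h1, abs_of_pos h]; ring
    have hvk : ∑ i, |v i| = (k : ℝ) := by
      rw [hpart (fun i => |v i|)]
      have h1 : ∑ i ∈ Tf, |v i| = (Tf.card : ℝ) := by
        rw [Finset.sum_congr rfl habsT, Finset.sum_const, nsmul_eq_mul, mul_one]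
      have h2 : ∑ i ∈ Rf, |v i| = 0 := by
        rw [Finset.sum_congr rfl (fun i hi => by
          rw [hR i (by simpa [hRfdef] using hi), abs_zero]), Finset.sum_const, smul_zero]
      rw [h1, h2, hEsum]
      ring
    have hvz : ∑ i, v i * z i = sk n k z := by
      rw [hpart (fun i => v i * z i), hskz]
      have h1 : ∑ i ∈ Tf, v i * z i = ∑ i ∈ Tf, |z i| := by
        apply Finset.sum_congr rfl
        intro i hi
        have h1 : m < |z i| := by simpa [hTfdef] using hi
        rw [hT i h1, Stmt10Aux.sign_mul_self]
      have h2 : ∑ i ∈ Ef, v i * z i = (∑ i ∈ Ef, |v i|) * m := by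
        rw [Finset.sum_mul]
        apply Finset.sum_congr rfl
        intro i hi
        rw [← (habsE i hi).2]
      have h3 : ∑ i ∈ Rf, v i * z i = 0 := by
        rw [Finset.sum_congr rfl (fun i hi => by
          rw [hR i (by simpa [hRfdef] using hi), zero_mul]), Finset.sum_const, smul_zero]
      rw [h1, h2, h3, hEsum]
      ring
    intro y
    have hy := inner_le_sk hk1 hkn v y hv1 hvk.le
    rw [inner_eq]
    have hexp : ∑ i, v i * (y - z) i = ∑ i, v i * y i - ∑ i, v i * z i := by
      rw [← Finset.sum_sub_distrib]
      apply Finset.sum_congr rfl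
      intro i _
      have : (y - z) i = y i - z i := by simp [PiLp.sub_apply]
      rw [this]
      ring
    rw [hexp, hvz]
    linarith
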